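/- With the CGMY data below, define for t > 0 the Laplace-type integral L₂₁(t) := (b̃²·t²/(2π))·∫₀^∞ w²·exp(-σ_Y·t·w^Y)/(w² + 1/4) dw. Then lim_{t→0⁺} L₂₁(t)/t^{2 - 1/Y} = a₂₁, where a₂₁ := b̃²·σ_Y^{-1/Y}·Γ(1/Y)/(2·π·Y). -/

import Mathlib

open MeasureTheory Filter Topology Complex

/-- The stable scale coefficient `σ_Y = 2·C·Γ(-Y)·|cos(πY/2)|`. -/
noncomputable def sigmaY (C Y : ℝ) : ℝ :=
  2 * C * Real.Gamma (-Y) * |Real.cos (Real.pi * Y / 2)|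

/-- The martingale drift `b̃`. -/
noncomputable def btilde (C G M Y : ℝ) : ℝ :=
  -(C * Real.Gamma (-Y) * ((M - 1) ^ Y + (G + 1) ^ Y - M ^ Y - G ^ Y))

/-- The constant `κ = b̃/2 - C·Γ(-Y)·(M^Y + G^Y)`. -/
noncomputable def kappaC (C G M Y : ℝ) : ℝ :=
  btilde C G M Y / 2 - C * Real.Gamma (-Y) * (M ^ Y + G ^ Y)

/-- The limiting stable exponent `θ₀(u) = -σ_Y·|u|^Y`. -/
noncomputable def theta0 (C Y : ℝ) (u : ℝ) : ℝ :=
  -(sigmaY C Y) * |u| ^ Y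

/-- The contour-shifted characteristic exponent `ψ₀`. -/
noncomputable def psi0 (C G M Y : ℝ) (v : ℝ) : ℂ :=
  Complex.I * (v : ℂ) * ((btilde C G M Y : ℝ) : ℂ) + ((kappaC C G M Y : ℝ) : ℂ)
    + ((C * Real.Gamma (-Y) : ℝ) : ℂ) *
      ((((M - 1/2 : ℝ) : ℂ) - Complex.I * (v : ℂ)) ^ (Y : ℂ)
        + (((G + 1/2 : ℝ) : ℂ) + Complex.I * (v : ℂ)) ^ (Y : ℂ))

/-- The rescaled exponent `θ(t,v)` in the Lipton–Lewis representation. -/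
noncomputable def thetaT (C G M Y : ℝ) (t v : ℝ) : ℂ :=
  Complex.I * (v : ℂ) * ((btilde C G M Y : ℝ) : ℂ) * ((t ^ (1 - 1/Y) : ℝ) : ℂ)
    + ((kappaC C G M Y : ℝ) : ℂ) * (t : ℂ)
    + ((C * Real.Gamma (-Y) : ℝ) : ℂ) *
      (((((M - 1/2) * t ^ (1/Y) : ℝ) : ℂ) - Complex.I * (v : ℂ)) ^ (Y : ℂ)
        + ((((G + 1/2) * t ^ (1/Y) : ℝ) : ℂ) + Complex.I * (v : ℂ)) ^ (Y : ℂ))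

/-- The normalized Lipton–Lewis ATM factor `L(t)`. -/
noncomputable def LLfn (C G M Y : ℝ) (t : ℝ) : ℝ :=
  (1 / Real.pi) *
    (∫ v in Set.Ioi (0 : ℝ),
      (1 - Complex.exp (thetaT C G M Y t v)) / (((v ^ 2 + t ^ (2/Y) / 4 : ℝ)) : ℂ)).re

/-- The first-order coefficient `d₁`. -/
noncomputable def dOne (C Y : ℝ) : ℝ :=
  (1 / Real.pi) * Real.Gamma (1 - 1/Y) * (sigmaY C Y) ^ (1/Y)

/-- The second-order coefficient `d₂`. -/
noncomputable def dTwo (C G M Y : ℝ) : ℝ :=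
  (1 / Real.pi) * ∫ w in Set.Ioi (0 : ℝ),
    ((w ^ 2 + 1/4) * theta0 C Y w - w ^ 2 * (psi0 C G M Y w).re) / (w ^ 2 * (w ^ 2 + 1/4))

/-- The drift-squared Laplace integral `L₂₁(t)` satisfies
`L₂₁(t)/t^{2-1/Y} → a₂₁ = b̃²·σ_Y^{-1/Y}·Γ(1/Y)/(2πY)` as `t → 0⁺`. -/
theorem stmt10 (C G M Y : ℝ) (hC : 0 < C) (hG : 0 ≤ G) (hM : 1 < M)
    (hY1 : 1 < Y) (hY2 : Y < 2) :
    Tendsto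
      (fun t : ℝ =>
        ((btilde C G M Y) ^ 2 * t ^ 2 / (2 * Real.pi)) *
          (∫ w in Set.Ioi (0 : ℝ),
            w ^ 2 * Real.exp (-(sigmaY C Y) * t * w ^ Y) / (w ^ 2 + 1/4))
          / t ^ (2 - 1/Y))
      (𝓝[>] 0)
      (𝓝 ((btilde C G M Y) ^ 2 * (sigmaY C Y) ^ (-(1/Y)) * Real.Gamma (1/Y)
        / (2 * Real.pi * Y))) := by
  
  have hY0 : (0:ℝ) < Y := by linarith
  have hYinv : (0:ℝ) < 1/Y := by positivity
  set σ := sigmaY C Y with hσdef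
  have hσ : 0 < σ := by
    have hG2 : 0 < Real.Gamma (2 - Y) := Real.Gamma_pos_of_pos (by linarith)
    have e2 : Real.Gamma ((1 - Y) + 1) = (1 - Y) * Real.Gamma (1 - Y) :=
      Real.Gamma_add_one (by intro h; apply absurd h; intro h2; linarith)
    have e1 : Real.Gamma ((-Y) + 1) = (-Y) * Real.Gamma (-Y) :=
      Real.Gamma_add_one (by intro h; linarith)
    rw [show (-Y) + 1 = 1 - Y by ring] at e1
    rw [show (1 - Y) + 1 = 2 - Y by ring, e1] at e2
    have hΓ : 0 < Real.Gamma (-Y) := by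
      by_contra hcon
      push_neg at hcon
      nlinarith [mul_nonneg (mul_nonneg hY0.le (by linarith : (0:ℝ) ≤ Y - 1))
        (neg_nonneg.mpr hcon)]
    have hcos : Real.cos (Real.pi * Y / 2) < 0 := by
      apply Real.cos_neg_of_pi_div_two_lt_of_lt
      · nlinarith [Real.pi_pos]
      · nlinarith [Real.pi_pos]
    have habs : 0 < |Real.cos (Real.pi * Y / 2)| := abs_pos.mpr (ne_of_lt hcos)
    rw [hσdef]
    unfold sigmaY
    have h2C : (0:ℝ) < 2 * C := by linarith
    exact mul_pos (mul_pos h2C hΓ) habs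
  have hbound_int : MeasureTheory.IntegrableOn (fun u : ℝ => Real.exp (-σ * u ^ Y)) (Set.Ioi 0) := by
    have h := integrableOn_rpow_mul_exp_neg_mul_rpow (by norm_num : (-1:ℝ) < 0) hY0 hσ
    simpa [Real.rpow_zero] using h
  have hJ : Tendsto
      (fun s : ℝ => ∫ u in Set.Ioi (0:ℝ), u ^ 2 * Real.exp (-σ * u ^ Y) / (u ^ 2 + s ^ 2 / 4))
      (𝓝[>] 0) (𝓝 (∫ u in Set.Ioi (0:ℝ), Real.exp (-σ * u ^ Y))) := by
    apply MeasureTheory.tendsto_integral_filter_of_dominated_convergence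
      (fun u => Real.exp (-σ * u ^ Y))
    · filter_upwards [self_mem_nhdsWithin] with s hs
      have hs0 : (0:ℝ) < s := hs
      apply ContinuousOn.aestronglyMeasurable _ measurableSet_Ioi
      apply ContinuousOn.div
      · exact (continuous_pow 2).continuousOn.mul
          (Real.continuous_exp.comp_continuousOn
            (continuousOn_const.mul
              (continuousOn_id.rpow_const fun x hx => Or.inl (ne_of_gt hx))))
      · exact (continuous_pow 2).continuousOn.add continuousOn_const
      · intro x hx
        positivity
    · filter_upwards [self_mem_nhdsWithin] with s hs
      filter_upwards [MeasureTheory.ae_restrict_mem measurableSet_Ioi] with u hu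
      have hu0 : (0:ℝ) < u := hu
      have hs0 : (0:ℝ) < s := hs
      rw [Real.norm_eq_abs, _root_.abs_of_nonneg (by positivity)]
      rw [div_le_iff₀ (by positivity)]
      nlinarith [Real.exp_pos (-σ * u ^ Y), sq_nonneg s, sq_nonneg u]
    · exact hbound_int
    · filter_upwards [MeasureTheory.ae_restrict_mem measurableSet_Ioi] with u hu
      have hu0 : (0:ℝ) < u := hu
      have h1 : Tendsto (fun s : ℝ => u ^ 2 + s ^ 2 / 4) (𝓝[>] 0) (𝓝 (u ^ 2)) := by
        have hc : Tendsto (fun s : ℝ => u ^ 2 + s ^ 2 / 4) (𝓝 0)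
            (𝓝 (u ^ 2 + (0:ℝ) ^ 2 / 4)) := by
          apply Continuous.tendsto
          continuity
        simpa using hc.mono_left nhdsWithin_le_nhds
      have h2 := Filter.Tendsto.div
        (tendsto_const_nhds : Tendsto (fun _ : ℝ => u ^ 2 * Real.exp (-σ * u ^ Y)) (𝓝[>] 0)
          (𝓝 (u ^ 2 * Real.exp (-σ * u ^ Y)))) h1 (by positivity)
      have he : u ^ 2 * Real.exp (-σ * u ^ Y) / u ^ 2 = Real.exp (-σ * u ^ Y) := by
        field_simp
      rwa [he] at h2
  have hval : ∫ u in Set.Ioi (0:ℝ), Real.exp (-σ * u ^ Y)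
      = σ ^ (-(1/Y)) * Real.Gamma (1/Y) / Y := by
    rw [integral_exp_neg_mul_rpow hY0 hσ, Real.Gamma_add_one (ne_of_gt hYinv),
      show (-1 : ℝ)/Y = -(1/Y) by ring]
    ring
  have hs_tendsto : Tendsto (fun t : ℝ => t ^ (1/Y)) (𝓝[>] (0:ℝ)) (𝓝[>] 0) := by
    apply tendsto_nhdsWithin_of_tendsto_nhds_of_eventually_within
    · have h := (Real.continuousAt_rpow_const 0 (1/Y) (Or.inr hYinv.le)).tendsto
      rw [Real.zero_rpow (ne_of_gt hYinv)] at h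
      exact h.mono_left nhdsWithin_le_nhds
    · filter_upwards [self_mem_nhdsWithin] with t ht
      exact Real.rpow_pos_of_pos ht _
  have hcomp := hJ.comp hs_tendsto
  have hfinal : Tendsto
      (fun t : ℝ => (btilde C G M Y ^ 2 / (2 * Real.pi)) *
        ∫ u in Set.Ioi (0:ℝ), u ^ 2 * Real.exp (-σ * u ^ Y) / (u ^ 2 + (t ^ (1/Y)) ^ 2 / 4))
      (𝓝[>] 0)
      (𝓝 ((btilde C G M Y ^ 2 / (2 * Real.pi)) *
        ∫ u in Set.Ioi (0:ℝ), Real.exp (-σ * u ^ Y))) :=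
    tendsto_const_nhds.mul hcomp
  rw [hval] at hfinal
  have hconst : btilde C G M Y ^ 2 * σ ^ (-(1/Y)) * Real.Gamma (1/Y) / (2 * Real.pi * Y)
      = (btilde C G M Y ^ 2 / (2 * Real.pi)) * (σ ^ (-(1/Y)) * Real.Gamma (1/Y) / Y) := by
    ring
  rw [hconst]
  apply hfinal.congr'
  filter_upwards [self_mem_nhdsWithin] with t ht
  have ht0 : (0:ℝ) < t := ht
  set s := t ^ (1/Y) with hsdef
  have hs0 : 0 < s := Real.rpow_pos_of_pos ht0 _
  have hsY : s ^ Y = t := by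
    rw [hsdef, ← Real.rpow_mul ht0.le, one_div, inv_mul_cancel₀ (ne_of_gt hY0), Real.rpow_one]
  have h := integral_comp_mul_left_Ioi
    (fun u : ℝ => u ^ 2 * Real.exp (-σ * u ^ Y) / (u ^ 2 + s ^ 2 / 4)) 0 hs0
  rw [mul_zero, smul_eq_mul] at h
  have h2 : (∫ x in Set.Ioi (0:ℝ),
        (s * x) ^ 2 * Real.exp (-σ * (s * x) ^ Y) / ((s * x) ^ 2 + s ^ 2 / 4))
      = ∫ w in Set.Ioi (0:ℝ), w ^ 2 * Real.exp (-σ * t * w ^ Y) / (w ^ 2 + 1/4) := by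
    apply MeasureTheory.setIntegral_congr_fun measurableSet_Ioi
    intro w hw
    dsimp only
    have hw0 : (0:ℝ) < w := hw
    have hrw : (s * w) ^ Y = t * w ^ Y := by
      rw [Real.mul_rpow hs0.le hw0.le, hsY]
    rw [hrw, ← mul_assoc]
    have hs2 : s ^ 2 ≠ 0 := by positivity
    rw [mul_pow]
    rw [show s ^ 2 * w ^ 2 + s ^ 2 / 4 = s ^ 2 * (w ^ 2 + 1/4) by ring]
    rw [mul_assoc, mul_div_mul_left _ _ hs2]
  rw [h2] at h
  -- h : ∫ w, F t w = s⁻¹ * ∫ u, g u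
  have hcov : (∫ u in Set.Ioi (0:ℝ), u ^ 2 * Real.exp (-σ * u ^ Y) / (u ^ 2 + s ^ 2 / 4))
      = s * ∫ w in Set.Ioi (0:ℝ), w ^ 2 * Real.exp (-σ * t * w ^ Y) / (w ^ 2 + 1/4) := by
    rw [h, ← mul_assoc, mul_inv_cancel₀ (ne_of_gt hs0), one_mul]
  rw [hcov]
  have ht2 : t ^ ((2:ℝ) - 1/Y) = t ^ 2 / s := by
    rw [Real.rpow_sub ht0, hsdef,
      show ((2:ℝ) = ((2:ℕ):ℝ)) by norm_num, Real.rpow_natCast]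
  rw [show (2 : ℝ) - 1/Y = ((2:ℝ) - 1/Y) from rfl, ht2]
  field_simp
  ring
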